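/- In A = F[U][X]/(X² - UX) over a polynomial ring F[U] with F a field, an element a ∈ A is a zero divisor if and only if a lies in the ideal generated by X or in the ideal generated by X - U. -/

import Mathlib

open Polynomial

section BNaux

variable {F : Type*} [Field F]

private lemma bn_fact :
    ((X : Polynomial (Polynomial F)) ^ 2 - C Polynomial.X * X)
      = X * (X - C Polynomial.X) := by ring

private lemma bn_nd1 : ¬ (X : Polynomial (Polynomial F)) ∣ (X - C Polynomial.X) := by
  rintro ⟨k, hk⟩
  have := congrArg (Polynomial.eval 0) hk
  simp at this

private lemma bn_nd2 : ¬ ((X : Polynomial (Polynomial F)) - C Polynomial.X) ∣ X := by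
  rintro ⟨k, hk⟩
  have := congrArg (Polynomial.eval (Polynomial.X : Polynomial F)) hk
  simp at this

private lemma bn_pdvd (h : Polynomial (Polynomial F)) :
    ((X : Polynomial (Polynomial F)) ^ 2 - C Polynomial.X * X) ∣ h ↔
      (X : Polynomial (Polynomial F)) ∣ h ∧ ((X : Polynomial (Polynomial F)) - C Polynomial.X) ∣ h := by
  constructor
  · intro hd
    exact ⟨dvd_trans ⟨X - C Polynomial.X, bn_fact⟩ hd,
      dvd_trans ⟨X, by rw [bn_fact]; ring⟩ hd⟩
  · rintro ⟨⟨k, rfl⟩, hd2⟩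
    have hpr : Prime ((X : Polynomial (Polynomial F)) - C Polynomial.X) :=
      Polynomial.prime_X_sub_C _
    have : ((X : Polynomial (Polynomial F)) - C Polynomial.X) ∣ k :=
      (hpr.dvd_mul.mp hd2).resolve_left bn_nd2
    obtain ⟨m, rfl⟩ := this
    exact ⟨m, by rw [bn_fact]; ring⟩

private lemma bn_degp :
    ((X : Polynomial (Polynomial F)) ^ 2 - C Polynomial.X * X).degree = 2 := by
  rw [bn_fact, Polynomial.degree_mul, Polynomial.degree_X, Polynomial.degree_X_sub_C]
  rfl

private lemma bn_ne (q : Polynomial (Polynomial F)) (hq : q.degree = 1) :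
    Ideal.Quotient.mk
      (Ideal.span {(X : Polynomial (Polynomial F)) ^ 2 - C Polynomial.X * X}) q ≠ 0 := by
  intro h
  rw [Ideal.Quotient.eq_zero_iff_mem, Ideal.mem_span_singleton] at h
  have hq0 : q ≠ 0 := fun h0 => by simp [h0] at hq
  have := Polynomial.degree_le_of_dvd h hq0
  rw [bn_degp, hq] at this
  norm_num at this

private lemma bn_key (q : Polynomial (Polynomial F))
    (hq : q ∣ ((X : Polynomial (Polynomial F)) ^ 2 - C Polynomial.X * X))
    (f : Polynomial (Polynomial F)) :
    Ideal.Quotient.mk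
        (Ideal.span {(X : Polynomial (Polynomial F)) ^ 2 - C Polynomial.X * X}) f ∈
      Ideal.span {Ideal.Quotient.mk
        (Ideal.span {(X : Polynomial (Polynomial F)) ^ 2 - C Polynomial.X * X}) q} ↔
    q ∣ f := by
  rw [Ideal.mem_span_singleton (α := Polynomial (Polynomial F) ⧸ Ideal.span ({(X : Polynomial (Polynomial F)) ^ 2 - C Polynomial.X * X} : Set (Polynomial (Polynomial F))))]
  constructor
  · rintro ⟨c, hc⟩
    obtain ⟨g, rfl⟩ := Ideal.Quotient.mk_surjective c
    have h0 : Ideal.Quotient.mk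
        (Ideal.span {(X : Polynomial (Polynomial F)) ^ 2 - C Polynomial.X * X})
        (f - q * g) = 0 := by
      rw [map_sub, map_mul, hc]
      ring
    rw [Ideal.Quotient.eq_zero_iff_mem, Ideal.mem_span_singleton] at h0
    have h1 : q ∣ f - q * g := dvd_trans hq h0
    have h2 := dvd_add h1 (Dvd.intro g rfl)
    simpa using h2
  · rintro ⟨c, rfl⟩
    exact ⟨Ideal.Quotient.mk _ c, by rw [map_mul]⟩

end BNaux

/-- In `A = F[U][X]/(X² - UX)` over a field `F`, an element is a zero divisor
if and only if it lies in the ideal generated by `X` or in the ideal generated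
by `X - U`. -/
theorem stmt12 (F : Type*) [Field F]
    (a : Polynomial (Polynomial F) ⧸
      Ideal.span {(X : Polynomial (Polynomial F)) ^ 2 - C Polynomial.X * X}) :
    (∃ b : Polynomial (Polynomial F) ⧸
        Ideal.span {(X : Polynomial (Polynomial F)) ^ 2 - C Polynomial.X * X},
      b ≠ 0 ∧ a * b = 0) ↔
    a ∈ Ideal.span {Ideal.Quotient.mk
        (Ideal.span {(X : Polynomial (Polynomial F)) ^ 2 - C Polynomial.X * X}) X} ∨
    a ∈ Ideal.span {Ideal.Quotient.mk
        (Ideal.span {(X : Polynomial (Polynomial F)) ^ 2 - C Polynomial.X * X})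
        (X - C Polynomial.X)} := by
  obtain ⟨f, rfl⟩ := Ideal.Quotient.mk_surjective a
  constructor
  · rintro ⟨b, hb0, hab⟩
    obtain ⟨g, rfl⟩ := Ideal.Quotient.mk_surjective b
    have hg : ¬ ((X : Polynomial (Polynomial F)) ^ 2 - C Polynomial.X * X) ∣ g := by
      intro h
      exact hb0 (by rw [Ideal.Quotient.eq_zero_iff_mem, Ideal.mem_span_singleton]; exact h)
    have hfg : ((X : Polynomial (Polynomial F)) ^ 2 - C Polynomial.X * X) ∣ f * g := by
      have h : Ideal.Quotient.mk
          (Ideal.span {(X : Polynomial (Polynomial F)) ^ 2 - C Polynomial.X * X})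
          (f * g) = 0 := by rw [map_mul]; exact hab
      rwa [Ideal.Quotient.eq_zero_iff_mem, Ideal.mem_span_singleton] at h
    by_contra hcon
    push_neg at hcon
    obtain ⟨h1, h2⟩ := hcon
    rw [bn_key X ⟨X - C Polynomial.X, bn_fact⟩ f] at h1
    rw [bn_key (X - C Polynomial.X) ⟨X, by rw [bn_fact]; ring⟩ f] at h2
    have hXprime : Prime (X : Polynomial (Polynomial F)) := Polynomial.prime_X
    have hX'prime : Prime ((X : Polynomial (Polynomial F)) - C Polynomial.X) :=
      Polynomial.prime_X_sub_C _
    have hXg : (X : Polynomial (Polynomial F)) ∣ g :=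
      (hXprime.dvd_mul.mp (dvd_trans ⟨X - C Polynomial.X, bn_fact⟩ hfg)).resolve_left h1
    have hX'g : ((X : Polynomial (Polynomial F)) - C Polynomial.X) ∣ g :=
      (hX'prime.dvd_mul.mp (dvd_trans ⟨X, by rw [bn_fact]; ring⟩ hfg)).resolve_left h2
    exact hg ((bn_pdvd g).mpr ⟨hXg, hX'g⟩)
  · rintro (h | h)
    · rw [bn_key X ⟨X - C Polynomial.X, bn_fact⟩ f] at h
      obtain ⟨c, rfl⟩ := h
      refine ⟨Ideal.Quotient.mk _ (X - C Polynomial.X),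
        bn_ne _ (Polynomial.degree_X_sub_C _), ?_⟩
      rw [← map_mul, Ideal.Quotient.eq_zero_iff_mem, Ideal.mem_span_singleton]
      exact ⟨c, by rw [bn_fact]; ring⟩
    · rw [bn_key (X - C Polynomial.X) ⟨X, by rw [bn_fact]; ring⟩ f] at h
      obtain ⟨c, rfl⟩ := h
      refine ⟨Ideal.Quotient.mk _ X, bn_ne _ Polynomial.degree_X, ?_⟩
      rw [← map_mul, Ideal.Quotient.eq_zero_iff_mem, Ideal.mem_span_singleton]
      exact ⟨c, by rw [bn_fact]; ring⟩
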